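/- Let d be a positive integer and let λ = (λ_1, …, λ_d) be a vector with strictly positive entries. Let (T_n) be an arbitrary sequence of real-valued random variables, and let (λ̂_n) be a sequence of random vectors in ℝ^d converging in probability to λ. Define p_n = 1 − H(T_n; λ) and p̂_n = 1 − H(T_n; λ̂_n). Then p̂_n − p_n converges in probability to 0. -/

import Mathlib

open MeasureTheory ProbabilityTheory Filter

/-- The product of `d` independent standard normal distributions. -/
noncomputable def stdGaussPi (d : ℕ) : Measure (Fin d → ℝ) :=
  Measure.pi fun _ => gaussianReal 0 1

/-- `mixCDF d lam q = H(q; λ) = P(∑ j, λ_j Z_j² ≤ q)` for `Z_1, …, Z_d` IID standard normal. -/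
noncomputable def mixCDF (d : ℕ) (lam : Fin d → ℝ) (q : ℝ) : ℝ :=
  (stdGaussPi d {z | ∑ j, lam j * z j ^ 2 ≤ q}).toReal

instance (d : ℕ) : IsProbabilityMeasure (stdGaussPi d) := by
  unfold stdGaussPi; infer_instance

lemma measurable_g (d : ℕ) (lam : Fin d → ℝ) :
    Measurable fun z : Fin d → ℝ => ∑ j, lam j * z j ^ 2 :=
  by fun_prop

lemma stdGaussPi_ac (d : ℕ) : stdGaussPi d ≪ (volume : Measure (Fin d → ℝ)) := by
  induction d with
  | zero =>
    intro s hs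
    rcases Set.eq_empty_or_nonempty s with h | h
    · simp [h]
    · exfalso
      have hsu : s = Set.univ := h.eq_univ
      rw [hsu] at hs
      simp [volume_pi, Measure.pi_univ] at hs
  | succ n ih =>
    set e := MeasurableEquiv.piFinSuccAbove (fun _ : Fin (n+1) => ℝ) 0 with he
    have h1 : MeasurePreserving e (stdGaussPi (n+1))
        ((gaussianReal 0 1).prod (stdGaussPi n)) :=
      measurePreserving_piFinSuccAbove (fun _ : Fin (n+1) => gaussianReal 0 1) 0
    have h2 : MeasurePreserving e (volume : Measure (Fin (n+1) → ℝ))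
        (volume : Measure (ℝ × (Fin n → ℝ))) :=
      volume_preserving_piFinSuccAbove (fun _ : Fin (n+1) => ℝ) 0
    have hprod : (gaussianReal 0 1).prod (stdGaussPi n)
        ≪ (volume : Measure (ℝ × (Fin n → ℝ))) := by
      rw [Measure.volume_eq_prod]
      exact (gaussianReal_absolutelyContinuous 0 one_ne_zero).prod ih
    have hG : stdGaussPi (n+1) = ((gaussianReal 0 1).prod (stdGaussPi n)).map e.symm := by
      rw [← h1.map_eq, MeasurableEquiv.map_symm_map]
    have hv : (volume : Measure (Fin (n+1) → ℝ))
        = (volume : Measure (ℝ × (Fin n → ℝ))).map e.symm := by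
      rw [← h2.map_eq, MeasurableEquiv.map_symm_map]
    rw [hG, hv]
    exact hprod.map e.symm.measurable

lemma g_nonneg {d : ℕ} {lam : Fin d → ℝ} (hlam : ∀ j, 0 < lam j) (z : Fin d → ℝ) :
    0 ≤ ∑ j, lam j * z j ^ 2 :=
  Finset.sum_nonneg fun j _ => mul_nonneg (hlam j).le (sq_nonneg _)

lemma g_smul {d : ℕ} (lam : Fin d → ℝ) (c : ℝ) (z : Fin d → ℝ) :
    ∑ j, lam j * (c • z) j ^ 2 = c ^ 2 * ∑ j, lam j * z j ^ 2 := by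
  rw [Finset.mul_sum]
  exact Finset.sum_congr rfl fun j _ => by simp [smul_eq_mul]; ring

lemma convex_sublevel {d : ℕ} {lam : Fin d → ℝ} (hlam : ∀ j, 0 < lam j) (q : ℝ) :
    Convex ℝ {z : Fin d → ℝ | ∑ j, lam j * z j ^ 2 ≤ q} := by
  intro x hx y hy a b ha hb hab
  simp only [Set.mem_setOf_eq] at *
  calc ∑ j, lam j * (a • x + b • y) j ^ 2
      = ∑ j, lam j * (a * x j + b * y j) ^ 2 := by
        refine Finset.sum_congr rfl fun j _ => ?_
        simp [smul_eq_mul]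
    _ ≤ ∑ j, (a * (lam j * x j ^ 2) + b * (lam j * y j ^ 2)) := by
        refine Finset.sum_le_sum fun j _ => ?_
        have hb1 : b = 1 - a := by linarith
        subst hb1
        nlinarith [mul_nonneg (mul_nonneg (hlam j).le (mul_nonneg ha hb))
          (sq_nonneg (x j - y j))]
    _ = a * ∑ j, lam j * x j ^ 2 + b * ∑ j, lam j * y j ^ 2 := by
        rw [Finset.sum_add_distrib, Finset.mul_sum, Finset.mul_sum]
    _ ≤ a * q + b * q := add_le_add
        (mul_le_mul_of_nonneg_left hx ha) (mul_le_mul_of_nonneg_left hy hb)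
    _ = q := by rw [← add_mul, hab, one_mul]

lemma levelset_null {d : ℕ} (hd : 0 < d) {lam : Fin d → ℝ} (hlam : ∀ j, 0 < lam j) (q : ℝ) :
    stdGaussPi d {z | ∑ j, lam j * z j ^ 2 = q} = 0 := by
  apply stdGaussPi_ac d
  rcases lt_trichotomy q 0 with hq | hq | hq
  · have h0 : {z : Fin d → ℝ | ∑ j, lam j * z j ^ 2 = q} = ∅ := by
      ext z
      simp only [Set.mem_setOf_eq, Set.mem_empty_iff_false, iff_false]
      intro h
      have := g_nonneg hlam z
      linarith
    simp [h0]
  · subst hq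
    have hset : {z : Fin d → ℝ | ∑ j, lam j * z j ^ 2 = 0} = {0} := by
      ext z
      simp only [Set.mem_setOf_eq, Set.mem_singleton_iff]
      constructor
      · intro h
        funext j
        have h1 : ∀ i ∈ Finset.univ, (0:ℝ) ≤ lam i * z i ^ 2 :=
          fun i _ => mul_nonneg (hlam i).le (sq_nonneg _)
        have h2 := (Finset.sum_eq_zero_iff_of_nonneg h1).1 h j (Finset.mem_univ j)
        have h3 : z j ^ 2 = 0 := by
          rcases mul_eq_zero.1 h2 with h' | h'
          · exact absurd h' (hlam j).ne'
          · exact h'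
        have := pow_eq_zero_iff (n := 2) (by norm_num) |>.1 h3
        simpa using this
      · intro h; subst h; simp
    rw [hset]
    haveI : Nonempty (Fin d) := ⟨⟨0, hd⟩⟩
    exact measure_singleton 0
  · -- q > 0 : the level set is inside the frontier of a convex sublevel set
    have hsub : {z : Fin d → ℝ | ∑ j, lam j * z j ^ 2 = q}
        ⊆ frontier {z : Fin d → ℝ | ∑ j, lam j * z j ^ 2 ≤ q} := by
      intro z hz
      simp only [Set.mem_setOf_eq] at hz
      rw [← closure_diff_interior]
      constructor
      · exact subset_closure (by simp only [Set.mem_setOf_eq]; exact hz.le)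
      · intro hint
        have hK : {z : Fin d → ℝ | ∑ j, lam j * z j ^ 2 ≤ q} ∈ nhds z :=
          mem_interior_iff_mem_nhds.1 hint
        have htend : Tendsto (fun n : ℕ => ((1 : ℝ) + 1 / (n + 1)) • z) atTop (nhds z) := by
          have h1 : Tendsto (fun n : ℕ => ((1 : ℝ) + 1 / (n + 1))) atTop (nhds 1) := by
            have h0 := tendsto_one_div_add_atTop_nhds_zero_nat (𝕜 := ℝ)
            have h0' := (tendsto_const_nhds (x := (1:ℝ)) (f := atTop)).add h0
            simpa using h0'
          have := h1.smul_const z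
          simpa using this
        obtain ⟨n, hn⟩ := (htend.eventually hK).exists
        have hn' : ∑ j, lam j * ((((1:ℝ) + 1 / (n + 1)) • z) j) ^ 2 ≤ q := hn
        rw [g_smul] at hn'
        have hpos : (0:ℝ) < 1 / (n + 1) := by positivity
        rw [hz] at hn'
        nlinarith [mul_pos hpos hq, sq_nonneg (1 / ((n:ℝ) + 1)), mul_pos (mul_pos hpos hpos) hq]
    refine measure_mono_null hsub ?_
    exact (convex_sublevel hlam q).addHaar_frontier volume

/-- The pushforward law of `∑ λ_j Z_j²`. -/
noncomputable def mixLaw (d : ℕ) (lam : Fin d → ℝ) : Measure ℝ :=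
  (stdGaussPi d).map (fun z => ∑ j, lam j * z j ^ 2)

instance (d : ℕ) (lam : Fin d → ℝ) : IsProbabilityMeasure (mixLaw d lam) :=
  Measure.isProbabilityMeasure_map (measurable_g d lam).aemeasurable

lemma mixCDF_eq_cdf (d : ℕ) (lam : Fin d → ℝ) (q : ℝ) :
    mixCDF d lam q = cdf (mixLaw d lam) q := by
  rw [cdf_eq_real, Measure.real, mixLaw, Measure.map_apply (measurable_g d lam) measurableSet_Iic]
  rfl

lemma continuous_mixcdf {d : ℕ} (hd : 0 < d) {lam : Fin d → ℝ} (hlam : ∀ j, 0 < lam j) :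
    Continuous (cdf (mixLaw d lam)) := by
  rw [continuous_iff_continuousAt]
  intro x
  have hatom : mixLaw d lam {x} = 0 := by
    rw [mixLaw, Measure.map_apply (measurable_g d lam) (measurableSet_singleton x)]
    exact levelset_null hd hlam x
  have hmono : Monotone (cdf (mixLaw d lam)) := monotone_cdf _
  rw [hmono.continuousAt_iff_leftLim_eq_rightLim]
  have hright : Function.rightLim (cdf (mixLaw d lam)) x = cdf (mixLaw d lam) x :=
    (cdf (mixLaw d lam)).rightLim_eq x
  have hmeas : (cdf (mixLaw d lam)).measure {x} = 0 := by
    rw [measure_cdf]; exact hatom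
  rw [StieltjesFunction.measure_singleton] at hmeas
  have h1 : cdf (mixLaw d lam) x - Function.leftLim (cdf (mixLaw d lam)) x ≤ 0 :=
    ENNReal.ofReal_eq_zero.1 hmeas
  have h2 : Function.leftLim (cdf (mixLaw d lam)) x ≤ cdf (mixLaw d lam) x :=
    hmono.leftLim_le le_rfl
  rw [hright]
  linarith

/-- Uniform multiplicative continuity of the cdf. -/
lemma uniform_small {d : ℕ} (hd : 0 < d) {lam : Fin d → ℝ} (hlam : ∀ j, 0 < lam j) :
    ∀ ε : ℝ, 0 < ε → ∃ a : ℝ, 1/2 ≤ a ∧ a < 1 ∧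
      ∀ s : ℝ, 0 ≤ s → cdf (mixLaw d lam) (s / a) - cdf (mixLaw d lam) (s * a) ≤ ε := by
  intro ε hε
  set F := fun x => cdf (mixLaw d lam) x with hF
  have hFc : Continuous F := continuous_mixcdf hd hlam
  -- tail bound
  obtain ⟨M₀, hM₀⟩ := eventually_atTop.1
    ((tendsto_cdf_atTop (mixLaw d lam)).eventually
      (eventually_ge_nhds (show 1 - ε < 1 by linarith)))
  set M : ℝ := max M₀ 1 with hM
  have hM1 : (1:ℝ) ≤ M := le_max_right _ _
  have hMtail : ∀ q : ℝ, M ≤ q → 1 - ε ≤ F q := fun q hq =>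
    hM₀ q (le_trans (le_max_left _ _) hq)
  -- uniform continuity on [0, 4M]
  have hcomp : IsCompact (Set.Icc (0:ℝ) (4*M)) := isCompact_Icc
  have hUC' := hcomp.uniformContinuousOn_of_continuous hFc.continuousOn
  rw [Metric.uniformContinuousOn_iff] at hUC'
  obtain ⟨η, hη, hUC⟩ := hUC' ε hε
  -- choose a
  set a : ℝ := max (1/2) (1 - η / (9*M)) with ha
  have hahalf : (1:ℝ)/2 ≤ a := le_max_left _ _
  have hapos : 0 < a := by linarith
  have ha1 : a < 1 := by
    apply max_lt (by norm_num)
    have : 0 < η / (9*M) := by positivity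
    linarith
  have har : 1 - a ≤ η / (9*M) := by
    have h' : 1 - η / (9*M) ≤ a := le_max_right _ _
    linarith
  have har' : (1 - a) * (9*M) ≤ η := by
    rw [← le_div_iff₀ (by positivity)]
    exact har
  refine ⟨a, hahalf, ha1, ?_⟩
  intro s hs
  have hF1 : ∀ x, F x ≤ 1 := fun x => cdf_le_one _ x
  by_cases hcase : M ≤ s * a
  · have t1 := hMtail (s*a) hcase
    have t2 := hF1 (s/a)
    linarith
  · push_neg at hcase
    have hsle : s ≤ 2*M := by nlinarith [mul_le_mul_of_nonneg_left hahalf hs]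
    have hmem1 : s / a ∈ Set.Icc (0:ℝ) (4*M) := by
      constructor
      · exact div_nonneg hs hapos.le
      · rw [div_le_iff₀ hapos]; nlinarith
    have hmem2 : s * a ∈ Set.Icc (0:ℝ) (4*M) := by
      constructor
      · exact mul_nonneg hs hapos.le
      · nlinarith
    have hdist : dist (s/a) (s*a) < η := by
      rw [Real.dist_eq, abs_of_nonneg]
      · have key : s / a - s * a = s * (1 - a) * (1 + a) / a := by
          field_simp; ring
        rw [key, div_lt_iff₀ hapos]
        nlinarith [mul_nonneg (mul_nonneg hs (by linarith : (0:ℝ) ≤ 1 - a))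
          (by linarith : (0:ℝ) ≤ 1 + a),
          mul_nonneg (by linarith : (0:ℝ) ≤ 2*M - s)
          (mul_nonneg (by linarith : (0:ℝ) ≤ 1 - a) (by linarith : (0:ℝ) ≤ 1 + a))]
      · have h' : s * a ≤ s / a := by
          rw [le_div_iff₀ hapos]
          nlinarith [mul_nonneg (mul_nonneg hs (by linarith : (0:ℝ) ≤ 1 - a))
            (by linarith : (0:ℝ) ≤ 1 + a)]
        linarith
    have hd' := hUC _ hmem1 _ hmem2 hdist
    rw [Real.dist_eq] at hd'
    have habs := le_abs_self (F (s/a) - F (s*a))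
    linarith

/-- Deterministic uniform estimate: if `μ` is close to `lam`, then the two mixture cdfs are
uniformly close. -/
lemma mixCDF_close {d : ℕ} (hd : 0 < d) {lam : Fin d → ℝ} (hlam : ∀ j, 0 < lam j) :
    ∀ ε : ℝ, 0 < ε → ∃ δ : ℝ, 0 < δ ∧ ∀ (mu : Fin d → ℝ) (q : ℝ),
      ‖mu - lam‖ ≤ δ → |mixCDF d mu q - mixCDF d lam q| ≤ ε := by
  intro ε hε
  obtain ⟨a, hahalf, ha1, hunif⟩ := uniform_small hd hlam ε hε
  have hapos : (0:ℝ) < a := by linarith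
  haveI : Nonempty (Fin d) := ⟨⟨0, hd⟩⟩
  set c : ℝ := Finset.univ.inf' Finset.univ_nonempty lam with hc
  have hcpos : 0 < c := by
    rw [hc]
    apply (Finset.lt_inf'_iff _).2
    exact fun j _ => hlam j
  have hcle : ∀ j, c ≤ lam j := fun j => Finset.inf'_le _ (Finset.mem_univ j)
  refine ⟨(1 - a) * c, mul_pos (by linarith) hcpos, ?_⟩
  intro mu q hmu
  -- componentwise closeness
  have hcomp : ∀ j, |mu j - lam j| ≤ (1 - a) * lam j := by
    intro j
    have h1 : |mu j - lam j| ≤ ‖mu - lam‖ := by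
      have := norm_le_pi_norm (mu - lam) j
      simpa [Real.norm_eq_abs] using this
    have h2 : (1 - a) * c ≤ (1 - a) * lam j :=
      mul_le_mul_of_nonneg_left (hcle j) (by linarith)
    linarith
  -- termwise bounds on the quadratic forms
  have hlow : ∀ z : Fin d → ℝ, a * ∑ j, lam j * z j ^ 2 ≤ ∑ j, mu j * z j ^ 2 := by
    intro z
    rw [Finset.mul_sum]
    refine Finset.sum_le_sum fun j _ => ?_
    have h := abs_le.1 (hcomp j)
    nlinarith [sq_nonneg (z j)]
  have hhigh : ∀ z : Fin d → ℝ, ∑ j, mu j * z j ^ 2 ≤ (2 - a) * ∑ j, lam j * z j ^ 2 := by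
    intro z
    rw [Finset.mul_sum]
    refine Finset.sum_le_sum fun j _ => ?_
    have h := abs_le.1 (hcomp j)
    nlinarith [sq_nonneg (z j)]
  rcases lt_or_ge q 0 with hq | hq
  · -- both probabilities are zero
    have he1 : {z : Fin d → ℝ | ∑ j, mu j * z j ^ 2 ≤ q} = ∅ := by
      ext z
      simp only [Set.mem_setOf_eq, Set.mem_empty_iff_false, iff_false]
      intro h
      have h1 := hlow z
      have h2 := g_nonneg hlam z
      nlinarith
    have he2 : {z : Fin d → ℝ | ∑ j, lam j * z j ^ 2 ≤ q} = ∅ := by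
      ext z
      simp only [Set.mem_setOf_eq, Set.mem_empty_iff_false, iff_false]
      intro h
      have h2 := g_nonneg hlam z
      linarith
    simp [mixCDF, he1, he2]
    linarith
  · -- sandwich both cdfs between F(q*a) and F(q/a)
    set F := fun x => cdf (mixLaw d lam) x with hF
    have hFmono : Monotone F := fun u v huv => monotone_cdf _ huv
    have hFdef : ∀ x, F x = mixCDF d lam x := fun x => (mixCDF_eq_cdf d lam x).symm
    have hmu_upper : mixCDF d mu q ≤ F (q / a) := by
      rw [hFdef]
      unfold mixCDF
      apply ENNReal.toReal_mono (measure_ne_top _ _)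
      apply measure_mono
      intro z hz
      simp only [Set.mem_setOf_eq] at *
      rw [le_div_iff₀ hapos]
      calc (∑ j, lam j * z j ^ 2) * a = a * ∑ j, lam j * z j ^ 2 := mul_comm _ _
        _ ≤ ∑ j, mu j * z j ^ 2 := hlow z
        _ ≤ q := hz
    have hmu_lower : F (q * a) ≤ mixCDF d mu q := by
      rw [hFdef]
      unfold mixCDF
      apply ENNReal.toReal_mono (measure_ne_top _ _)
      apply measure_mono
      intro z hz
      simp only [Set.mem_setOf_eq] at *
      have h1 := hhigh z
      have h2 : (2 - a) * (∑ j, lam j * z j ^ 2) ≤ (2 - a) * (q * a) :=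
        mul_le_mul_of_nonneg_left hz (by linarith)
      nlinarith [mul_nonneg hq (sq_nonneg (1 - a))]
    have hl_upper : mixCDF d lam q ≤ F (q / a) := by
      rw [← hFdef q]
      apply hFmono
      rw [le_div_iff₀ hapos]
      nlinarith [mul_nonneg hq (by linarith : (0:ℝ) ≤ 1 - a)]
    have hl_lower : F (q * a) ≤ mixCDF d lam q := by
      rw [← hFdef q]
      apply hFmono
      nlinarith [mul_nonneg hq (by linarith : (0:ℝ) ≤ 1 - a)]
    have hgap : F (q / a) - F (q * a) ≤ ε := hunif q hq
    rw [abs_le]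
    constructor <;> linarith

theorem stmt0 {Ω : Type*} [MeasurableSpace Ω] (P : Measure Ω) [IsProbabilityMeasure P]
    (d : ℕ) (hd : 0 < d) (lam : Fin d → ℝ) (hlam : ∀ j, 0 < lam j)
    (T : ℕ → Ω → ℝ) (hT : ∀ n, Measurable (T n))
    (lamHat : ℕ → Ω → Fin d → ℝ) (hlamHat : ∀ n, Measurable (lamHat n))
    (hprob : ∀ ε > 0, Tendsto (fun n => P {ω | ε < ‖lamHat n ω - lam‖}) atTop (nhds 0)) :
    ∀ ε > 0,
      Tendsto
        (fun n => P {ω |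
          ε < |(1 - mixCDF d (lamHat n ω) (T n ω)) - (1 - mixCDF d lam (T n ω))|})
        atTop (nhds 0) := by
  intro ε hε
  obtain ⟨δ, hδ, hclose⟩ := mixCDF_close hd hlam ε hε
  have hsub : ∀ n, {ω | ε < |(1 - mixCDF d (lamHat n ω) (T n ω))
      - (1 - mixCDF d lam (T n ω))|} ⊆ {ω | δ < ‖lamHat n ω - lam‖} := by
    intro n ω hω
    simp only [Set.mem_setOf_eq] at *
    by_contra h
    push_neg at h
    have := hclose (lamHat n ω) (T n ω) h
    have heq : (1 - mixCDF d (lamHat n ω) (T n ω)) - (1 - mixCDF d lam (T n ω))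
        = -(mixCDF d (lamHat n ω) (T n ω) - mixCDF d lam (T n ω)) := by ring
    rw [heq, abs_neg] at hω
    linarith
  have hle : ∀ n, P {ω | ε < |(1 - mixCDF d (lamHat n ω) (T n ω))
      - (1 - mixCDF d lam (T n ω))|} ≤ P {ω | δ < ‖lamHat n ω - lam‖} :=
    fun n => measure_mono (hsub n)
  exact tendsto_of_tendsto_of_tendsto_of_le_of_le tendsto_const_nhds (hprob δ hδ)
    (fun n => zero_le) hle
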